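/- Let n ≥ 4. Define c(j) := j for 1 ≤ j ≤ n and c(j) := 2n−1−j for n < j ≤ 2n−2. Then the map Φ sending m ∈ {0, 1, …, 2n−2} to e_1 − Σ_{j=1}^{m} α_{c(j)}, and sending the extra element μ to e_1 − (α_1 + α_2 + ⋯ + α_{n−2} + α_n), is a bijection from the set {0, 1, …, 2n−2} ∪ {μ} onto the set {e_k : 1 ≤ k ≤ n} ∪ {−e_k : 1 ≤ k ≤ n} ⊂ ℤ^n, which is the orbit of the fundamental weight Λ_1 = e_1 under the type D_n Weyl group. -/
import Mathlib

namespace Stmt3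

/-- Standard basis vector `e_k` (1-indexed) of `ℤ^n`. -/
def E (n k : ℕ) : Fin n → ℤ := fun x => if (x : ℕ) + 1 = k then 1 else 0

/-- Type `D_n` simple roots: `α_k = e_k - e_{k+1}` for `1 ≤ k ≤ n-1`
and `α_n = e_{n-1} + e_n`. -/
def alpha (n k : ℕ) : Fin n → ℤ :=
  if k = n then E n (n - 1) + E n n else E n k - E n (k + 1)

/-- The residue of the `j`-th column of the one-row diagram `(2n-2)`. -/
def c (n j : ℕ) : ℕ := if j ≤ n then j else 2 * n - 1 - j

/-- `Φ`: `some m` (with `0 ≤ m ≤ 2n-2`) encodes the one-row diagram `(m)`,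
mapped to `e_1 - ∑_{j=1}^m α_{c(j)}`; `none` encodes the extra element `μ = (1^{n-1})`,
mapped to `e_1 - (α_1 + ⋯ + α_{n-2} + α_n)`. -/
def Phi (n : ℕ) : Option (Fin (2 * n - 1)) → (Fin n → ℤ)
  | some m => E n 1 - ∑ j ∈ Finset.Icc 1 (m : ℕ), alpha n (c n j)
  | none => E n 1 - (∑ k ∈ Finset.Icc 1 (n - 2), alpha n k + alpha n n)

lemma alpha_ne (n k : ℕ) (h : k ≠ n) : alpha n k = E n k - E n (k+1) := if_neg h
lemma alpha_self (n : ℕ) : alpha n n = E n (n-1) + E n n := if_pos rfl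

lemma sum_eq (n : ℕ) (hn : 4 ≤ n) (m : ℕ) (hm : m ≤ 2*n-2) :
    ∑ j ∈ Finset.Icc 1 m, alpha n (c n j) =
      if m + 1 ≤ n then E n 1 - E n (m+1) else E n 1 + E n (2*n-1-m) := by
  induction m with
  | zero => simp [show (0:ℕ)+1 ≤ n by omega]
  | succ m ih =>
    rw [Finset.sum_Icc_succ_top (by omega : 1 ≤ m+1), ih (by omega)]
    by_cases h1 : m + 2 ≤ n
    · have hc : c n (m+1) = m+1 := if_pos (by omega)
      rw [hc, alpha_ne n (m+1) (by omega), if_pos (by omega), if_pos h1]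
      abel
    · by_cases h2 : m + 1 = n
      · have hc : c n (m+1) = m+1 := if_pos (by omega)
        rw [hc, h2, alpha_self, if_pos (le_refl n), if_neg (by omega),
          show 2*n-1-n = n-1 from by omega]
        abel
      · have hc : c n (m+1) = 2*n-2-m := by
          unfold c; rw [if_neg (by omega)]; omega
        rw [hc, alpha_ne n _ (by omega), if_neg (by omega), if_neg (by omega),
          show 2*n-1-m = (2*n-2-m)+1 from by omega,
          show 2*n-1-(m+1) = 2*n-2-m from by omega]
        abel

lemma Phi_some (n : ℕ) (hn : 4 ≤ n) (m : Fin (2*n-1)) :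
    Phi n (some m) =
      if (m:ℕ)+1 ≤ n then E n ((m:ℕ)+1) else -E n (2*n-1-(m:ℕ)) := by
  have hm : (m:ℕ) ≤ 2*n-2 := by have := m.isLt; omega
  show E n 1 - _ = _
  rw [sum_eq n hn m hm]
  split <;> abel

lemma Phi_none (n : ℕ) (hn : 4 ≤ n) : Phi n none = -E n n := by
  have h1 : ∑ k ∈ Finset.Icc 1 (n-2), alpha n k = E n 1 - E n (n-1) := by
    have h := sum_eq n hn (n-2) (by omega)
    rw [if_pos (by omega), show n-2+1 = n-1 from by omega] at h
    rw [← h]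
    refine Finset.sum_congr rfl fun j hj => ?_
    have hj' : j ≤ n - 2 := (Finset.mem_Icc.mp hj).2
    rw [show c n j = j from if_pos (by omega)]
  show E n 1 - _ = _
  rw [h1, alpha_self]
  abel

lemma E_inj {n k l : ℕ} (hk1 : 1 ≤ k) (hk : k ≤ n) (h : E n k = E n l) : k = l := by
  by_contra hne
  have h2 := congrFun h ⟨k-1, by omega⟩
  simp only [E] at h2
  rw [if_pos (by omega), if_neg (by omega)] at h2
  exact one_ne_zero h2

lemma E_ne_neg {n k l : ℕ} (hk1 : 1 ≤ k) (hk : k ≤ n) : E n k ≠ -E n l := by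
  intro h
  have h2 := congrFun h ⟨k-1, by omega⟩
  simp only [E, Pi.neg_apply] at h2
  rw [if_pos (by omega)] at h2
  split at h2 <;> omega

theorem stmt3 (n : ℕ) (hn : 4 ≤ n) :
    Set.BijOn (Phi n) Set.univ
      {v : Fin n → ℤ | ∃ k, 1 ≤ k ∧ k ≤ n ∧ (v = E n k ∨ v = -E n k)} := by
  refine ⟨?_, ?_, ?_⟩
  · rintro (_ | m) -
    · rw [Phi_none n hn]
      exact ⟨n, by omega, le_refl n, Or.inr rfl⟩
    · rw [Phi_some n hn m]
      have hm : (m:ℕ) ≤ 2*n-2 := by have := m.isLt; omega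
      split
      · exact ⟨(m:ℕ)+1, by omega, by omega, Or.inl rfl⟩
      · exact ⟨2*n-1-(m:ℕ), by omega, by omega, Or.inr rfl⟩
  · rintro (_ | a) - (_ | b) - hab
    · rfl
    · exfalso
      rw [Phi_none n hn, Phi_some n hn b] at hab
      have hb : (b:ℕ) ≤ 2*n-2 := by have := b.isLt; omega
      split at hab
      · exact E_ne_neg (by omega) (by omega) hab.symm
      · have := E_inj (k := 2*n-1-(b:ℕ)) (by omega) (by omega) (neg_injective hab.symm)
        omega
    · exfalso
      rw [Phi_none n hn, Phi_some n hn a] at hab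
      have ha : (a:ℕ) ≤ 2*n-2 := by have := a.isLt; omega
      split at hab
      · exact E_ne_neg (by omega) (by omega) hab
      · have := E_inj (k := 2*n-1-(a:ℕ)) (by omega) (by omega) (neg_injective hab)
        omega
    · rw [Phi_some n hn a, Phi_some n hn b] at hab
      have ha : (a:ℕ) ≤ 2*n-2 := by have := a.isLt; omega
      have hb : (b:ℕ) ≤ 2*n-2 := by have := b.isLt; omega
      split at hab <;> split at hab
      · have := E_inj (by omega) (by omega) hab
        exact congrArg some (Fin.ext (by omega))
      · exact absurd hab (E_ne_neg (by omega) (by omega))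
      · exact absurd hab.symm (E_ne_neg (by omega) (by omega))
      · have := E_inj (k := 2*n-1-(a:ℕ)) (by omega) (by omega) (neg_injective hab)
        exact congrArg some (Fin.ext (by omega))
  · rintro v ⟨k, hk1, hkn, hv | hv⟩
    · refine ⟨some ⟨k-1, by omega⟩, Set.mem_univ _, ?_⟩
      rw [Phi_some n hn, hv]
      simp only
      rw [if_pos (by omega : k-1+1 ≤ n), show k-1+1 = k from by omega]
    · by_cases hk : k = n
      · exact ⟨none, Set.mem_univ _, by rw [Phi_none n hn, hv, hk]⟩
      · refine ⟨some ⟨2*n-1-k, by omega⟩, Set.mem_univ _, ?_⟩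
        rw [Phi_some n hn, hv]
        simp only
        rw [if_neg (by omega), show 2*n-1-(2*n-1-k) = k from by omega]

end Stmt3
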